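/- Karlin–McGregor formula: Let X_1,…,X_n be independent Markov chains on ℤ, all with the same one-step transition probabilities p(x,y) supported on y = x ± 1 (i.e. p(x,x+1) + p(x,x−1) = 1), started at even sites k_1 < k_2 < ⋯ < k_n. Then for states ℓ_1 < ℓ_2 < ⋯ < ℓ_n, the probability that X_i(t) = ℓ_i for all i and that no two chains are ever at the same site at the same time during {0,1,…,t} equals det[p_t(k_i, ℓ_j)]_{1≤i,j≤n}, where p_t denotes the t-step transition probability. -/

import Mathlib

open scoped BigOperators Classical

noncomputable section

/-- Position after `s` steps of a nearest-neighbour walk started at `k`,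
with up/down steps given by `ε`. -/
def pos (k : ℤ) {t : ℕ} (ε : Fin t → Bool) (s : ℕ) : ℤ :=
  k + ∑ j : Fin t, if (j : ℕ) < s then (if ε j then 1 else -1) else 0

/-- Probability weight of the nearest-neighbour path with steps `ε` started at `k`. -/
def pathWeight (p : ℤ → ℤ → ℝ) (k : ℤ) {t : ℕ} (ε : Fin t → Bool) : ℝ :=
  ∏ j : Fin t, p (pos k ε j) (pos k ε (j + 1))

/-- `t`-step transition probability of the nearest-neighbour Markov chain. -/
def transition (p : ℤ → ℤ → ℝ) (t : ℕ) (x y : ℤ) : ℝ :=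
  ∑ ε : Fin t → Bool, if pos x ε t = y then pathWeight p x ε else 0

namespace KM

lemma pos_zero (k : ℤ) {t : ℕ} (ε : Fin t → Bool) : pos k ε 0 = k := by
  simp [pos]

lemma pos_succ (k : ℤ) {t : ℕ} (ε : Fin t → Bool) {s : ℕ} (hs : s < t) :
    pos k ε (s + 1) = pos k ε s + (if ε ⟨s, hs⟩ then 1 else -1) := by
  have key : ∀ j : Fin t,
      (if (j : ℕ) < s + 1 then (if ε j then (1:ℤ) else -1) else 0)
        = (if (j : ℕ) < s then (if ε j then (1:ℤ) else -1) else 0)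
          + (if j = ⟨s, hs⟩ then (if ε j then (1:ℤ) else -1) else 0) := by
    intro j
    rcases lt_trichotomy (j : ℕ) s with h | h | h
    · have h1 : (j : ℕ) < s + 1 := Nat.lt_succ_of_lt h
      have h2 : j ≠ ⟨s, hs⟩ := by
        intro hj
        rw [hj] at h
        exact lt_irrefl _ h
      simp [h, h1, h2]
    · have h1 : (j : ℕ) < s + 1 := by omega
      have h2 : j = ⟨s, hs⟩ := Fin.ext h
      have h3 : ¬ (j : ℕ) < s := by omega
      simp [h1, h2, h3]
    · have h1 : ¬ (j : ℕ) < s + 1 := by omega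
      have h2 : ¬ (j : ℕ) < s := by omega
      have h3 : j ≠ ⟨s, hs⟩ := by
        intro hj
        rw [hj] at h
        exact lt_irrefl _ h
      simp [h1, h2, h3]
  unfold pos
  rw [Finset.sum_congr rfl fun j _ => key j, Finset.sum_add_distrib,
    Finset.sum_ite_eq' Finset.univ (⟨s, hs⟩ : Fin t)]
  simp [add_assoc]

lemma pos_congr (k : ℤ) {t : ℕ} {ε ε' : Fin t → Bool} {s : ℕ}
    (h : ∀ j : Fin t, (j : ℕ) < s → ε j = ε' j) : pos k ε s = pos k ε' s := by
  unfold pos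
  congr 1
  refine Finset.sum_congr rfl fun j _ => ?_
  by_cases hj : (j : ℕ) < s
  · simp [hj, h j hj]
  · simp [hj]

lemma pos_stable (k : ℤ) {t : ℕ} (ε : Fin t → Bool) {s : ℕ} (h : t ≤ s) :
    pos k ε s = pos k ε t := by
  unfold pos
  congr 1
  refine Finset.sum_congr rfl fun j _ => ?_
  have h1 : (j : ℕ) < s := lt_of_lt_of_le j.isLt h
  simp [h1, j.isLt]

lemma pos_sub_even {k k' : ℤ} (h : Even (k - k')) {t : ℕ} (ε ε' : Fin t → Bool) :
    ∀ s, s ≤ t → Even (pos k ε s - pos k' ε' s) := by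
  intro s
  induction s with
  | zero => intro _; simpa [pos_zero] using h
  | succ s ih =>
    intro hs
    have hst : s < t := hs
    have ih' := ih hst.le
    rw [pos_succ k ε hst, pos_succ k' ε' hst]
    have hc : Even ((if ε ⟨s, hst⟩ then (1:ℤ) else -1)
        - (if ε' ⟨s, hst⟩ then (1:ℤ) else -1)) := by
      cases hb : ε ⟨s, hst⟩ <;> cases hb' : ε' ⟨s, hst⟩ <;> simp
    have h2 := ih'.add hc
    have e : (pos k ε s - pos k' ε' s)
        + ((if ε ⟨s, hst⟩ then (1:ℤ) else -1) - (if ε' ⟨s, hst⟩ then (1:ℤ) else -1))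
        = (pos k ε s + (if ε ⟨s, hst⟩ then (1:ℤ) else -1))
          - (pos k' ε' s + (if ε' ⟨s, hst⟩ then (1:ℤ) else -1)) := by ring
    rwa [e] at h2

lemma noncross {t : ℕ} {x y : ℤ} (hxy : x < y) (hpar : Even (y - x))
    (εx εy : Fin t → Bool) (hne : ∀ s, s ≤ t → pos x εx s ≠ pos y εy s) :
    ∀ s, s ≤ t → pos x εx s < pos y εy s := by
  intro s
  induction s with
  | zero => intro _; simpa [pos_zero] using hxy
  | succ s ih =>
    intro hs
    have hst : s < t := hs
    have h1 := ih hst.le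
    have h2 : Even (pos y εy s - pos x εx s) := pos_sub_even hpar εy εx s hst.le
    have hne' := hne (s + 1) hs
    rw [pos_succ x εx hst, pos_succ y εy hst] at hne' ⊢
    rcases h2 with ⟨m, hm⟩
    cases hb : εx ⟨s, hst⟩ <;> cases hb' : εy ⟨s, hst⟩ <;>
      simp only [hb, hb', if_true, if_false] at hne' ⊢ <;> omega

/-- swap the suffixes (from time `s₀` on) of the walks of `i₀` and `j₀`. -/
def swapFun {n t : ℕ} (s₀ : ℕ) (i₀ j₀ : Fin n) (ε : Fin n → Fin t → Bool) :
    Fin n → Fin t → Bool :=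
  fun i j =>
    if i = i₀ then (if (j : ℕ) < s₀ then ε i₀ j else ε j₀ j)
    else if i = j₀ then (if (j : ℕ) < s₀ then ε j₀ j else ε i₀ j)
    else ε i j

lemma swapFun_fst {n t : ℕ} (s₀ : ℕ) (i₀ j₀ : Fin n) (ε : Fin n → Fin t → Bool) :
    swapFun s₀ i₀ j₀ ε i₀ = fun j : Fin t => if (j : ℕ) < s₀ then ε i₀ j else ε j₀ j := by
  funext j; simp [swapFun]

lemma swapFun_snd {n t : ℕ} (s₀ : ℕ) {i₀ j₀ : Fin n} (hji : j₀ ≠ i₀)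
    (ε : Fin n → Fin t → Bool) :
    swapFun s₀ i₀ j₀ ε j₀ = fun j : Fin t => if (j : ℕ) < s₀ then ε j₀ j else ε i₀ j := by
  funext j; simp [swapFun, hji]

lemma swapFun_other {n t : ℕ} (s₀ : ℕ) {i₀ j₀ i : Fin n} (h1 : i ≠ i₀) (h2 : i ≠ j₀)
    (ε : Fin n → Fin t → Bool) : swapFun s₀ i₀ j₀ ε i = ε i := by
  funext j; simp [swapFun, h1, h2]

lemma swapFun_swapFun {n t : ℕ} (s₀ : ℕ) {i₀ j₀ : Fin n} (hij : i₀ ≠ j₀)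
    (ε : Fin n → Fin t → Bool) : swapFun s₀ i₀ j₀ (swapFun s₀ i₀ j₀ ε) = ε := by
  funext i j
  by_cases h1 : i = i₀
  · subst h1
    simp only [swapFun, if_pos rfl, if_neg (Ne.symm hij)]
    by_cases hj : (j : ℕ) < s₀ <;> simp [hj]
  · by_cases h2 : i = j₀
    · subst h2
      simp only [swapFun, if_pos rfl, if_neg h1, if_neg (Ne.symm hij)]
      by_cases hj : (j : ℕ) < s₀ <;> simp [hj, Ne.symm hij]
    · simp [swapFun, h1, h2]

lemma swap_pos_le {n t : ℕ} (k : Fin n → ℤ) (s₀ : ℕ) (i₀ j₀ : Fin n)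
    (ε : Fin n → Fin t → Bool) (i : Fin n) {s : ℕ} (hs : s ≤ s₀) :
    pos (k i) (swapFun s₀ i₀ j₀ ε i) s = pos (k i) (ε i) s := by
  refine pos_congr _ fun j hj => ?_
  have hj' : (j : ℕ) < s₀ := lt_of_lt_of_le hj hs
  by_cases h1 : i = i₀
  · subst h1; simp [swapFun, hj']
  · by_cases h2 : i = j₀
    · subst h2; simp [swapFun, h1, hj']
    · simp [swapFun, h1, h2]

lemma pos_swapSuffix {t : ℕ} {k₁ k₂ : ℤ} {ε₁ ε₂ : Fin t → Bool} {s₀ : ℕ}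
    (hcol : pos k₁ ε₁ s₀ = pos k₂ ε₂ s₀) :
    ∀ s, s₀ ≤ s → pos k₁ (fun j => if (j : ℕ) < s₀ then ε₁ j else ε₂ j) s = pos k₂ ε₂ s := by
  intro s
  induction s with
  | zero =>
    intro hs
    have h0 : s₀ = 0 := Nat.le_zero.mp hs
    subst h0
    rw [pos_zero, pos_zero]
    rw [pos_zero, pos_zero] at hcol
    exact hcol
  | succ s ih =>
    intro hs
    rcases Nat.lt_or_ge s (s₀) with h | h
    · -- then s₀ = s + 1
      have h0 : s₀ = s + 1 := by omega
      subst h0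
      rw [← hcol]
      exact pos_congr _ fun j hj => by simp [hj]
    · -- s₀ ≤ s
      by_cases hts : s < t
      · rw [pos_succ _ _ hts, pos_succ _ _ hts, ih h]
        have hns : ¬ ((⟨s, hts⟩ : Fin t) : ℕ) < s₀ := by simp; omega
        simp [hns]
      · have ht1 : t ≤ s := Nat.le_of_not_lt hts
        have e1 : pos k₁ (fun j => if (j : ℕ) < s₀ then ε₁ j else ε₂ j) (s + 1)
            = pos k₁ (fun j => if (j : ℕ) < s₀ then ε₁ j else ε₂ j) s := by
          rw [pos_stable _ _ (by omega : t ≤ s + 1), pos_stable _ _ ht1]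
        have e2 : pos k₂ ε₂ (s + 1) = pos k₂ ε₂ s := by
          rw [pos_stable _ _ (by omega : t ≤ s + 1), pos_stable _ _ ht1]
        rw [e1, e2]
        exact ih h

lemma pathWeight_swapSuffix (p : ℤ → ℤ → ℝ) {t : ℕ} {k₁ k₂ : ℤ} {ε₁ ε₂ : Fin t → Bool}
    {s₀ : ℕ} (hcol : pos k₁ ε₁ s₀ = pos k₂ ε₂ s₀) :
    pathWeight p k₁ (fun j => if (j : ℕ) < s₀ then ε₁ j else ε₂ j)
      = ∏ j : Fin t, if (j : ℕ) < s₀ then p (pos k₁ ε₁ j) (pos k₁ ε₁ (j + 1))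
          else p (pos k₂ ε₂ j) (pos k₂ ε₂ (j + 1)) := by
  unfold pathWeight
  refine Finset.prod_congr rfl fun j _ => ?_
  by_cases hj : (j : ℕ) < s₀
  · rw [if_pos hj]
    have e1 : pos k₁ (fun m => if (m : ℕ) < s₀ then ε₁ m else ε₂ m) (j : ℕ)
        = pos k₁ ε₁ (j : ℕ) := pos_congr _ fun m hm => by
          have : (m : ℕ) < s₀ := by omega
          simp [this]
    have e2 : pos k₁ (fun m => if (m : ℕ) < s₀ then ε₁ m else ε₂ m) ((j : ℕ) + 1)
        = pos k₁ ε₁ ((j : ℕ) + 1) := pos_congr _ fun m hm => by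
          have : (m : ℕ) < s₀ := by omega
          simp [this]
    rw [e1, e2]
  · rw [if_neg hj]
    have h1 : s₀ ≤ (j : ℕ) := Nat.le_of_not_lt hj
    rw [pos_swapSuffix hcol (j : ℕ) h1, pos_swapSuffix hcol ((j : ℕ) + 1) (by omega)]

lemma prod_pair_swap {n : ℕ} {F F' : Fin n → ℝ} {i₀ j₀ : Fin n} (hij : i₀ ≠ j₀)
    (h1 : ∀ i, i ≠ i₀ → i ≠ j₀ → F' i = F i) (h2 : F' i₀ * F' j₀ = F i₀ * F j₀) :
    ∏ i, F' i = ∏ i, F i := by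
  classical
  have hj : j₀ ∈ Finset.univ.erase i₀ := Finset.mem_erase.2 ⟨hij.symm, Finset.mem_univ _⟩
  rw [← Finset.mul_prod_erase Finset.univ F' (Finset.mem_univ i₀),
    ← Finset.mul_prod_erase _ F' hj,
    ← Finset.mul_prod_erase Finset.univ F (Finset.mem_univ i₀),
    ← Finset.mul_prod_erase _ F hj, ← mul_assoc, ← mul_assoc, h2]
  congr 1
  refine Finset.prod_congr rfl fun i hi => ?_
  rw [Finset.mem_erase, Finset.mem_erase] at hi
  exact h1 i hi.2.1 hi.1

lemma prod_ite_all {m : ℕ} (P : Fin m → Prop) [DecidablePred P] [Decidable (∀ i, P i)]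
    (f : Fin m → ℝ) :
    (∏ i, if P i then f i else 0) = if (∀ i, P i) then ∏ i, f i else 0 := by
  by_cases h : ∀ i, P i
  · rw [if_pos h]
    exact Finset.prod_congr rfl fun i _ => if_pos (h i)
  · rw [if_neg h]
    push_neg at h
    obtain ⟨i, hi⟩ := h
    exact Finset.prod_eq_zero (Finset.mem_univ i) (if_neg hi)

lemma min'_congr {α : Type*} [LinearOrder α] {S T : Finset α} (h : S = T)
    {hS : S.Nonempty} {hT : T.Nonempty} : S.min' hS = T.min' hT := by
  subst h; rfl

/-- collision predicate. -/
def Coll {n t : ℕ} (k : Fin n → ℤ) (ε : Fin n → Fin t → Bool) : Prop :=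
  ∃ s, s ≤ t ∧ ∃ i j : Fin n, i ≠ j ∧ pos (k i) (ε i) s = pos (k j) (ε j) s

def set1 {n t : ℕ} (k : Fin n → ℤ) (ε : Fin n → Fin t → Bool) (s : ℕ) : Finset (Fin n) :=
  Finset.univ.filter fun i => ∃ j, j ≠ i ∧ pos (k i) (ε i) s = pos (k j) (ε j) s

def set2 {n t : ℕ} (k : Fin n → ℤ) (ε : Fin n → Fin t → Bool) (s : ℕ) (i₀ : Fin n) :
    Finset (Fin n) :=
  Finset.univ.filter fun j => j ≠ i₀ ∧ pos (k i₀) (ε i₀) s = pos (k j) (ε j) s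

def colT {n t : ℕ} (k : Fin n → ℤ) (ε : Fin n → Fin t → Bool) (h : Coll k ε) : ℕ :=
  Nat.find h

lemma colT_le {n t : ℕ} (k : Fin n → ℤ) (ε : Fin n → Fin t → Bool) (h : Coll k ε) :
    colT k ε h ≤ t := (Nat.find_spec h).1

lemma colT_spec {n t : ℕ} (k : Fin n → ℤ) (ε : Fin n → Fin t → Bool) (h : Coll k ε) :
    ∃ i j : Fin n, i ≠ j ∧ pos (k i) (ε i) (colT k ε h) = pos (k j) (ε j) (colT k ε h) :=
  (Nat.find_spec h).2

lemma colT_min {n t : ℕ} (k : Fin n → ℤ) (ε : Fin n → Fin t → Bool) (h : Coll k ε)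
    {m : ℕ} (hm : m < colT k ε h) :
    ¬ (m ≤ t ∧ ∃ i j : Fin n, i ≠ j ∧ pos (k i) (ε i) m = pos (k j) (ε j) m) :=
  Nat.find_min h hm

lemma colT_le_of {n t : ℕ} (k : Fin n → ℤ) (ε : Fin n → Fin t → Bool) (h : Coll k ε)
    {s : ℕ} (hs : s ≤ t ∧ ∃ i j : Fin n, i ≠ j ∧ pos (k i) (ε i) s = pos (k j) (ε j) s) :
    colT k ε h ≤ s := Nat.find_min' h hs

lemma set1_ne {n t : ℕ} (k : Fin n → ℤ) (ε : Fin n → Fin t → Bool) (h : Coll k ε) :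
    (set1 k ε (colT k ε h)).Nonempty := by
  obtain ⟨i, j, hij, hc⟩ := colT_spec k ε h
  refine ⟨i, ?_⟩
  simp only [set1, Finset.mem_filter, Finset.mem_univ, true_and]
  exact ⟨j, Ne.symm hij, hc⟩

def colI {n t : ℕ} (k : Fin n → ℤ) (ε : Fin n → Fin t → Bool) (h : Coll k ε) : Fin n :=
  (set1 k ε (colT k ε h)).min' (set1_ne k ε h)

lemma colI_mem {n t : ℕ} (k : Fin n → ℤ) (ε : Fin n → Fin t → Bool) (h : Coll k ε) :
    colI k ε h ∈ set1 k ε (colT k ε h) := Finset.min'_mem _ _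

lemma set2_ne {n t : ℕ} (k : Fin n → ℤ) (ε : Fin n → Fin t → Bool) (h : Coll k ε) :
    (set2 k ε (colT k ε h) (colI k ε h)).Nonempty := by
  have := colI_mem k ε h
  simp only [set1, Finset.mem_filter, Finset.mem_univ, true_and] at this
  obtain ⟨j, hj, hc⟩ := this
  refine ⟨j, ?_⟩
  simp only [set2, Finset.mem_filter, Finset.mem_univ, true_and]
  exact ⟨hj, hc⟩

def colJ {n t : ℕ} (k : Fin n → ℤ) (ε : Fin n → Fin t → Bool) (h : Coll k ε) : Fin n :=
  (set2 k ε (colT k ε h) (colI k ε h)).min' (set2_ne k ε h)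

lemma colJ_mem {n t : ℕ} (k : Fin n → ℤ) (ε : Fin n → Fin t → Bool) (h : Coll k ε) :
    colJ k ε h ∈ set2 k ε (colT k ε h) (colI k ε h) := Finset.min'_mem _ _

lemma colJ_ne {n t : ℕ} (k : Fin n → ℤ) (ε : Fin n → Fin t → Bool) (h : Coll k ε) :
    colJ k ε h ≠ colI k ε h := by
  have := colJ_mem k ε h
  simp only [set2, Finset.mem_filter, Finset.mem_univ, true_and] at this
  exact this.1

lemma col_eq {n t : ℕ} (k : Fin n → ℤ) (ε : Fin n → Fin t → Bool) (h : Coll k ε) :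
    pos (k (colI k ε h)) (ε (colI k ε h)) (colT k ε h)
      = pos (k (colJ k ε h)) (ε (colJ k ε h)) (colT k ε h) := by
  have := colJ_mem k ε h
  simp only [set2, Finset.mem_filter, Finset.mem_univ, true_and] at this
  exact this.2

/-- the sign-reversing involution. -/
def kmSwap {n t : ℕ} (k : Fin n → ℤ)
    (a : Equiv.Perm (Fin n) × (Fin n → Fin t → Bool)) :
    Equiv.Perm (Fin n) × (Fin n → Fin t → Bool) :=
  if h : Coll k a.2 then
    (a.1 * Equiv.swap (colI k a.2 h) (colJ k a.2 h),
      swapFun (colT k a.2 h) (colI k a.2 h) (colJ k a.2 h) a.2)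
  else a

section invariance

variable {n t : ℕ} (k : Fin n → ℤ) (ε : Fin n → Fin t → Bool) (h : Coll k ε)

lemma coll_swap : Coll k (swapFun (colT k ε h) (colI k ε h) (colJ k ε h) ε) := by
  refine ⟨colT k ε h, colT_le k ε h, colI k ε h, colJ k ε h, Ne.symm (colJ_ne k ε h), ?_⟩
  rw [swap_pos_le k _ _ _ ε _ le_rfl, swap_pos_le k _ _ _ ε _ le_rfl]
  exact col_eq k ε h

lemma colT_swap (h' : Coll k (swapFun (colT k ε h) (colI k ε h) (colJ k ε h) ε)) :
    colT k (swapFun (colT k ε h) (colI k ε h) (colJ k ε h) ε) h' = colT k ε h := by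
  have hle : colT k (swapFun (colT k ε h) (colI k ε h) (colJ k ε h) ε) h' ≤ colT k ε h := by
    refine colT_le_of k _ h' ⟨colT_le k ε h, colI k ε h, colJ k ε h,
      Ne.symm (colJ_ne k ε h), ?_⟩
    rw [swap_pos_le k _ _ _ ε _ le_rfl, swap_pos_le k _ _ _ ε _ le_rfl]
    exact col_eq k ε h
  have hge : ¬ colT k (swapFun (colT k ε h) (colI k ε h) (colJ k ε h) ε) h' < colT k ε h := by
    intro hlt
    obtain ⟨i, j, hij, hc⟩ := colT_spec k _ h'
    rw [swap_pos_le k _ _ _ ε i hle, swap_pos_le k _ _ _ ε j hle] at hc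
    exact colT_min k ε h hlt ⟨le_trans hle (colT_le k ε h), i, j, hij, hc⟩
  omega

lemma colI_swap (h' : Coll k (swapFun (colT k ε h) (colI k ε h) (colJ k ε h) ε)) :
    colI k (swapFun (colT k ε h) (colI k ε h) (colJ k ε h) ε) h' = colI k ε h := by
  set ε' := swapFun (colT k ε h) (colI k ε h) (colJ k ε h) ε with hε'
  have hT := colT_swap k ε h h'
  have hset : set1 k ε' (colT k ε' h') = set1 k ε (colT k ε h) := by
    rw [hT]
    unfold set1
    apply Finset.filter_congr
    intro i _
    have hp : ∀ m : Fin n, pos (k m) (ε' m) (colT k ε h) = pos (k m) (ε m) (colT k ε h) :=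
      fun m => swap_pos_le k _ _ _ ε m le_rfl
    simp only [hp]
  exact min'_congr hset

lemma colJ_swap (h' : Coll k (swapFun (colT k ε h) (colI k ε h) (colJ k ε h) ε)) :
    colJ k (swapFun (colT k ε h) (colI k ε h) (colJ k ε h) ε) h' = colJ k ε h := by
  set ε' := swapFun (colT k ε h) (colI k ε h) (colJ k ε h) ε with hε'
  have hT := colT_swap k ε h h'
  have hI := colI_swap k ε h h'
  have hset : set2 k ε' (colT k ε' h') (colI k ε' h')
      = set2 k ε (colT k ε h) (colI k ε h) := by
    rw [hT, hI]
    unfold set2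
    apply Finset.filter_congr
    intro i _
    have hp : ∀ m : Fin n, pos (k m) (ε' m) (colT k ε h) = pos (k m) (ε m) (colT k ε h) :=
      fun m => swap_pos_le k _ _ _ ε m le_rfl
    simp only [hp]
  exact min'_congr hset

end invariance

lemma kmSwap_kmSwap {n t : ℕ} (k : Fin n → ℤ)
    (a : Equiv.Perm (Fin n) × (Fin n → Fin t → Bool)) : kmSwap k (kmSwap k a) = a := by
  by_cases h : Coll k a.2
  · have h1 : kmSwap k a = (a.1 * Equiv.swap (colI k a.2 h) (colJ k a.2 h),
        swapFun (colT k a.2 h) (colI k a.2 h) (colJ k a.2 h) a.2) := by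
      rw [kmSwap, dif_pos h]
    rw [h1]
    have h' : Coll k (swapFun (colT k a.2 h) (colI k a.2 h) (colJ k a.2 h) a.2) :=
      coll_swap k a.2 h
    rw [kmSwap]
    rw [dif_pos h']
    have hT := colT_swap k a.2 h h'
    have hI := colI_swap k a.2 h h'
    have hJ := colJ_swap k a.2 h h'
    simp only [hT, hI, hJ]
    refine Prod.ext ?_ ?_
    · simp only
      rw [mul_assoc, Equiv.swap_mul_self, mul_one]
    · simp only
      exact swapFun_swapFun _ (Ne.symm (colJ_ne k a.2 h)) a.2
  · have e : kmSwap k a = a := by rw [kmSwap, dif_neg h]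
    rw [e, e]

end KM

open KM in
/-- Karlin–McGregor formula: for independent nearest-neighbour Markov chains on ℤ started
at even sites `k 0 < ⋯ < k (n-1)`, the probability of ending at `ℓ 0 < ⋯ < ℓ (n-1)` at time `t`
without any two chains ever meeting equals `det [p_t(k i, ℓ j)]`. -/
theorem karlin_mcgregor (p : ℤ → ℤ → ℝ)
    (hnn : ∀ x y, 0 ≤ p x y)
    (hsupp : ∀ x y, p x y ≠ 0 → y = x + 1 ∨ y = x - 1)
    (hsum : ∀ x, p x (x + 1) + p x (x - 1) = 1)
    (n t : ℕ) (k ℓ : Fin n → ℤ)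
    (hk : StrictMono k) (hkeven : ∀ i, Even (k i)) (hℓ : StrictMono ℓ) :
    (∑ ε : Fin n → Fin t → Bool,
      if (∀ i, pos (k i) (ε i) t = ℓ i) ∧
         (∀ s ≤ t, ∀ i j : Fin n, i ≠ j → pos (k i) (ε i) s ≠ pos (k j) (ε j) s)
      then ∏ i, pathWeight p (k i) (ε i) else 0)
      = Matrix.det (Matrix.of fun i j : Fin n => transition p t (k i) (ℓ j)) := by
  classical
  -- Step 1: Leibniz expansion and path expansion of the determinant
  have rhs1 : Matrix.det (Matrix.of fun i j : Fin n => transition p t (k i) (ℓ j))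
      = ∑ σ : Equiv.Perm (Fin n), ((Equiv.Perm.sign σ : ℤ) : ℝ)
          * ∑ ε : Fin n → Fin t → Bool,
              if (∀ i, pos (k i) (ε i) t = ℓ (σ i)) then ∏ i, pathWeight p (k i) (ε i)
              else 0 := by
    rw [← Matrix.det_transpose, Matrix.det_apply']
    refine Finset.sum_congr rfl fun σ _ => ?_
    congr 1
    have e1 : ∀ i : Fin n,
        (Matrix.of fun i j : Fin n => transition p t (k i) (ℓ j)).transpose (σ i) i
        = ∑ ε : Fin t → Bool,
            if pos (k i) ε t = ℓ (σ i) then pathWeight p (k i) ε else 0 := by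
      intro i
      simp [Matrix.transpose_apply, transition]
    rw [Finset.prod_congr rfl fun i _ => e1 i, Fintype.prod_sum]
    exact Finset.sum_congr rfl fun ε _ => prod_ite_all _ _
  rw [rhs1]
  -- Step 2: split each term according to whether a collision happens
  have split : (∑ σ : Equiv.Perm (Fin n), ((Equiv.Perm.sign σ : ℤ) : ℝ)
        * ∑ ε : Fin n → Fin t → Bool,
            if (∀ i, pos (k i) (ε i) t = ℓ (σ i)) then ∏ i, pathWeight p (k i) (ε i) else 0)
      = (∑ σ : Equiv.Perm (Fin n), ((Equiv.Perm.sign σ : ℤ) : ℝ)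
          * ∑ ε : Fin n → Fin t → Bool,
              if (∀ i, pos (k i) (ε i) t = ℓ (σ i)) ∧ Coll k ε
              then ∏ i, pathWeight p (k i) (ε i) else 0)
        + (∑ σ : Equiv.Perm (Fin n), ((Equiv.Perm.sign σ : ℤ) : ℝ)
            * ∑ ε : Fin n → Fin t → Bool,
                if (∀ i, pos (k i) (ε i) t = ℓ (σ i)) ∧ ¬ Coll k ε
                then ∏ i, pathWeight p (k i) (ε i) else 0) := by
    rw [← Finset.sum_add_distrib]
    refine Finset.sum_congr rfl fun σ _ => ?_
    rw [← mul_add, ← Finset.sum_add_distrib]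
    congr 1
    refine Finset.sum_congr rfl fun ε _ => ?_
    by_cases h1 : ∀ i, pos (k i) (ε i) t = ℓ (σ i) <;> by_cases h2 : Coll k ε <;>
      simp [h1, h2]
  rw [split]
  -- Step 3: collision part vanishes by the reflection involution
  have partA : (∑ x : Equiv.Perm (Fin n) × (Fin n → Fin t → Bool),
      ((Equiv.Perm.sign x.1 : ℤ) : ℝ)
        * if (∀ i, pos (k i) (x.2 i) t = ℓ (x.1 i)) ∧ Coll k x.2
          then ∏ i, pathWeight p (k i) (x.2 i) else 0) = 0 := by
    apply Finset.sum_ninvolution (kmSwap k)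
    · -- terms cancel in pairs
      intro a
      by_cases h : Coll k a.2
      · obtain ⟨σ, ε⟩ := a
        simp only at h
        have hswap : kmSwap k (σ, ε) = (σ * Equiv.swap (colI k ε h) (colJ k ε h),
            swapFun (colT k ε h) (colI k ε h) (colJ k ε h) ε) := by
          rw [kmSwap, dif_pos h]
        rw [hswap]
        set s₀ := colT k ε h with hs₀
        set i₀ := colI k ε h with hi₀
        set j₀ := colJ k ε h with hj₀
        set ε' := swapFun s₀ i₀ j₀ ε with hε'
        have hji : j₀ ≠ i₀ := colJ_ne k ε h
        have hij : i₀ ≠ j₀ := hji.symm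
        have hcol : pos (k i₀) (ε i₀) s₀ = pos (k j₀) (ε j₀) s₀ := col_eq k ε h
        have hst : s₀ ≤ t := colT_le k ε h
        -- endpoints
        have hpi : pos (k i₀) (ε' i₀) t = pos (k j₀) (ε j₀) t := by
          rw [hε', swapFun_fst]
          exact pos_swapSuffix hcol t hst
        have hpj : pos (k j₀) (ε' j₀) t = pos (k i₀) (ε i₀) t := by
          rw [hε', swapFun_snd _ hji]
          exact pos_swapSuffix hcol.symm t hst
        have hsign : ((Equiv.Perm.sign (σ * Equiv.swap i₀ j₀) : ℤ) : ℝ)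
            = -((Equiv.Perm.sign σ : ℤ) : ℝ) := by
          rw [Equiv.Perm.sign_mul, Equiv.Perm.sign_swap hij]
          push_cast
          ring
        have hW : (∏ i, pathWeight p (k i) (ε' i)) = ∏ i, pathWeight p (k i) (ε i) := by
          refine prod_pair_swap hij (fun i h1 h2 => by rw [hε', swapFun_other _ h1 h2]) ?_
          rw [hε', swapFun_fst, swapFun_snd _ hji,
            pathWeight_swapSuffix p hcol, pathWeight_swapSuffix p hcol.symm,
            ← Finset.prod_mul_distrib]
          unfold pathWeight
          rw [← Finset.prod_mul_distrib]
          refine Finset.prod_congr rfl fun j _ => ?_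
          by_cases hj : (j : ℕ) < s₀ <;> simp [hj, mul_comm]
        have hE : (∀ i, pos (k i) (ε' i) t = ℓ ((σ * Equiv.swap i₀ j₀) i))
            ↔ (∀ i, pos (k i) (ε i) t = ℓ (σ i)) := by
          constructor
          · intro hEp i
            by_cases h1 : i = i₀
            · subst h1
              have := hEp j₀
              rw [hpj] at this
              simpa [Equiv.Perm.mul_apply, Equiv.swap_apply_right] using this
            · by_cases h2 : i = j₀
              · subst h2
                have := hEp i₀
                rw [hpi] at this
                simpa [Equiv.Perm.mul_apply, Equiv.swap_apply_left] using this
              · have := hEp i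
                rw [hε', swapFun_other _ h1 h2] at this
                simpa [Equiv.Perm.mul_apply, Equiv.swap_apply_of_ne_of_ne h1 h2] using this
          · intro hEp i
            by_cases h1 : i = i₀
            · subst h1
              rw [hpi]
              simpa [Equiv.Perm.mul_apply, Equiv.swap_apply_left] using hEp j₀
            · by_cases h2 : i = j₀
              · subst h2
                rw [hpj]
                simpa [Equiv.Perm.mul_apply, Equiv.swap_apply_right] using hEp i₀
              · rw [hε', swapFun_other _ h1 h2]
                simpa [Equiv.Perm.mul_apply, Equiv.swap_apply_of_ne_of_ne h1 h2] using hEp i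
        have hC' : Coll k ε' := coll_swap k ε h
        by_cases hEε : ∀ i, pos (k i) (ε i) t = ℓ (σ i)
        · rw [if_pos ⟨hEε, h⟩, if_pos ⟨hE.2 hEε, hC'⟩, hW, hsign]
          ring
        · rw [if_neg (fun hc => hEε hc.1), if_neg (fun hc => hEε (hE.1 hc.1))]
          ring
      · have : kmSwap k a = a := by rw [kmSwap, dif_neg h]
        rw [this, if_neg (fun hc => h hc.2)]
        ring
    · -- nontrivial terms are moved
      intro a hfa
      have h : Coll k a.2 := by
        by_contra h
        exact hfa (by rw [if_neg (fun hc => h hc.2), mul_zero])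
      rw [kmSwap, dif_pos h]
      intro he
      have h1 := congrArg Prod.fst he
      simp only at h1
      have h2 : Equiv.swap (colI k a.2 h) (colJ k a.2 h) = 1 := mul_eq_left.mp h1
      apply colJ_ne k a.2 h
      have := congrArg (fun e : Equiv.Perm (Fin n) => e (colI k a.2 h)) h2
      simpa [Equiv.swap_apply_left] using this
    · intro a
      exact Finset.mem_univ _
    · intro a
      exact kmSwap_kmSwap k a
  have partA' : (∑ σ : Equiv.Perm (Fin n), ((Equiv.Perm.sign σ : ℤ) : ℝ)
      * ∑ ε : Fin n → Fin t → Bool,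
          if (∀ i, pos (k i) (ε i) t = ℓ (σ i)) ∧ Coll k ε
          then ∏ i, pathWeight p (k i) (ε i) else 0) = 0 := by
    rw [Fintype.sum_prod_type] at partA
    simpa [Finset.mul_sum] using partA
  rw [partA', zero_add]
  -- Step 4: non-collision part: only the identity permutation contributes
  rw [Finset.sum_eq_single (1 : Equiv.Perm (Fin n))]
  · simp only [Equiv.Perm.sign_one, Equiv.Perm.one_apply, Units.val_one, Int.cast_one,
      one_mul]
    refine Finset.sum_congr rfl fun ε _ => ?_
    refine if_congr ?_ rfl rfl
    constructor
    · rintro ⟨h1, h2⟩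
      refine ⟨h1, fun hc => ?_⟩
      obtain ⟨s, hs, i, j, hij, hc'⟩ := hc
      exact h2 s hs i j hij hc'
    · rintro ⟨h1, h2⟩
      exact ⟨h1, fun s hs i j hij hc => h2 ⟨s, hs, i, j, hij, hc⟩⟩
  · intro σ _ hσ
    have hz : ∀ ε : Fin n → Fin t → Bool,
        (if (∀ i, pos (k i) (ε i) t = ℓ (σ i)) ∧ ¬ Coll k ε
          then ∏ i, pathWeight p (k i) (ε i) else 0) = 0 := by
      intro ε
      rw [if_neg]
      rintro ⟨hE, hnc⟩
      apply hσ
      have hmono : StrictMono σ := by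
        intro i j hij
        have hne : ∀ s, s ≤ t → pos (k i) (ε i) s ≠ pos (k j) (ε j) s := by
          intro s hs hc
          exact hnc ⟨s, hs, i, j, ne_of_lt hij, hc⟩
        have hlt := noncross (hk hij) ((hkeven j).sub (hkeven i)) (ε i) (ε j) hne t le_rfl
        rw [hE i, hE j] at hlt
        exact hℓ.lt_iff_lt.mp hlt
      have hid : ⇑σ = id := by
        haveI : WellFoundedLT (Fin n) := inferInstance
        refine (hmono.range_inj (strictMono_id (α := Fin n))).1 ?_
        simp [Set.range_id, Equiv.range_eq_univ]
      exact Equiv.ext fun i => by rw [hid]; rfl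
    rw [Finset.sum_eq_zero fun ε _ => hz ε, mul_zero]
  · intro h1
    exact absurd (Finset.mem_univ 1) h1

end
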